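/- Let C and D be triangulated categories with small coproducts, C generated as its own localizing subcategory by a triangulated subcategory C' of compact objects, and let F : C → D be an exact coproduct-preserving functor whose restriction to C' is fully faithful and sends objects of C' to compact objects of D. Then F is fully faithful. -/

import Mathlib

set_option linter.unusedSectionVars false
set_option linter.unusedVariables false

open CategoryTheory CategoryTheory.Limits CategoryTheory.Pretriangulated

universe v u u'

variable (C : Type u) [Category.{v} C] [HasZeroObject C] [HasShift C ℤ]
  [Preadditive C] [∀ n : ℤ, (shiftFunctor C n).Additive] [Pretriangulated C]
  [HasCoproducts.{v} C]

/-- An object `M` is compact if `Hom(M, −)` respects (small) coproducts. -/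
def IsCompactObj (M : C) : Prop :=
  ∀ J : Type v, Nonempty (PreservesColimitsOfShape (Discrete J)
    (coyoneda.obj (Opposite.op M)))

/-- A class of objects is localizing: closed under isomorphisms, shifts, extensions
(distinguished triangles) and small coproducts. -/
def IsLocalizingClass (T : Set C) : Prop :=
  (∀ ⦃X Y : C⦄, (X ≅ Y) → X ∈ T → Y ∈ T) ∧
  (∀ (n : ℤ) ⦃X : C⦄, X ∈ T → X⟦n⟧ ∈ T) ∧
  (∀ Tr : Triangle C, Tr ∈ (distTriang C) → Tr.obj₁ ∈ T → Tr.obj₂ ∈ T → Tr.obj₃ ∈ T) ∧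
  (∀ ⦃J : Type v⦄ (f : J → C), (∀ j, f j ∈ T) → (∐ f) ∈ T)

section AuxFFF

variable {C}
variable {D : Type u'} [Category.{v} D] [HasZeroObject D] [HasShift D ℤ]
  [Preadditive D] [∀ n : ℤ, (shiftFunctor D n).Additive] [Pretriangulated D]
  [HasCoproducts.{v} D]
  (F : C ⥤ D) [F.CommShift ℤ]

/-- Bijectivity of `F.map` transfers along isomorphisms. -/
lemma auxFFF_iso {X X' Y Y' : C} (e : X ≅ X') (e' : Y ≅ Y')
    (h : Function.Bijective (fun f : X ⟶ Y => F.map f)) :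
    Function.Bijective (fun f : X' ⟶ Y' => F.map f) := by
  have key : (fun f : X' ⟶ Y' => F.map f)
      = (Iso.homCongr (F.mapIso e) (F.mapIso e'))
        ∘ (fun f : X ⟶ Y => F.map f) ∘ (Iso.homCongr e e').symm := by
    funext g
    show F.map g = F.map e.inv ≫ F.map (e.hom ≫ g ≫ e'.inv) ≫ F.map e'.hom
    rw [← F.map_comp, ← F.map_comp]
    congr 1
    simp
  rw [key]
  exact (Iso.homCongr _ _).bijective.comp (h.comp (Iso.homCongr e e').symm.bijective)

/-- Bijectivity of `F.map` transfers along shifts. -/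
lemma auxFFF_shift (n : ℤ) {X Y : C}
    (h : Function.Bijective (fun f : X ⟶ Y => F.map f)) :
    Function.Bijective (fun f : X⟦n⟧ ⟶ Y⟦n⟧ => F.map f) := by
  have hs : Function.Bijective (fun f : X ⟶ Y => f⟦n⟧') :=
    ⟨fun _ _ hh => (shiftFunctor C n).map_injective hh,
     fun g => (shiftFunctor C n).map_surjective g⟩
  have hsD : Function.Bijective (fun g : F.obj X ⟶ F.obj Y => g⟦n⟧') :=
    ⟨fun _ _ hh => (shiftFunctor D n).map_injective hh,
     fun g => (shiftFunctor D n).map_surjective g⟩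
  have key : (fun f : X⟦n⟧ ⟶ Y⟦n⟧ => F.map f)
      = (Iso.homCongr ((F.commShiftIso n).app X).symm ((F.commShiftIso n).app Y).symm)
        ∘ (fun g : F.obj X ⟶ F.obj Y => g⟦n⟧')
        ∘ (fun f : X ⟶ Y => F.map f)
        ∘ (Equiv.ofBijective _ hs).symm := by
    funext g
    obtain ⟨f, rfl⟩ := hs.2 g
    have h1 : (Equiv.ofBijective _ hs).symm ((fun f : X ⟶ Y => f⟦n⟧') f) = f :=
      (Equiv.ofBijective _ hs).symm_apply_apply f
    simp only [Function.comp_apply, h1, Iso.homCongr, Equiv.coe_fn_mk, Iso.symm_inv,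
      Iso.symm_hom, Iso.app_hom, Iso.app_inv]
    rw [← Category.assoc, ← F.commShiftIso_hom_naturality]
    simp
  rw [key]
  exact (Iso.homCongr _ _).bijective.comp (hsD.comp (h.comp
    (Equiv.ofBijective _ hs).symm.bijective))

section Triangulated

variable [F.IsTriangulated]

/-- Covariant five-lemma step. -/
lemma auxFFF_tri_cov (Tr : Triangle C) (hTr : Tr ∈ distTriang C) (X : C)
    (h₁ : Function.Bijective (fun g : X ⟶ Tr.obj₁ => F.map g))
    (h₂ : Function.Bijective (fun g : X ⟶ Tr.obj₂ => F.map g))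
    (h₁' : Function.Bijective (fun g : X ⟶ Tr.obj₁⟦(1:ℤ)⟧ => F.map g))
    (h₂' : Function.Bijective (fun g : X ⟶ Tr.obj₂⟦(1:ℤ)⟧ => F.map g)) :
    Function.Bijective (fun g : X ⟶ Tr.obj₃ => F.map g) := by
  have hDT := F.map_distinguished Tr hTr
  constructor
  · intro a b hab
    simp only at hab
    suffices hz : ∀ c : X ⟶ Tr.obj₃, F.map c = 0 → c = 0 by
      have hab' : a - b = 0 := hz _ (by rw [F.map_sub, hab, sub_self])
      rw [← sub_eq_zero]; exact hab'
    intro c hc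
    have h3 : c ≫ Tr.mor₃ = 0 := h₁'.1 (by simp [F.map_comp, hc])
    obtain ⟨s, rfl⟩ := Triangle.coyoneda_exact₃ Tr hTr c h3
    have hs : (F.map s) ≫ (F.mapTriangle.obj Tr).mor₂ = 0 := by
      exact (F.map_comp s Tr.mor₂).symm.trans hc
    obtain ⟨r, hr⟩ := Triangle.coyoneda_exact₂ _ hDT (F.map s) hs
    obtain ⟨q, rfl⟩ := h₁.2 r
    have hsq : s = q ≫ Tr.mor₁ := h₂.1 (by exact hr.trans (F.map_comp q Tr.mor₁).symm)
    rw [hsq, Category.assoc, comp_distTriang_mor_zero₁₂ Tr hTr, comp_zero]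
  · intro g
    obtain ⟨u, hu⟩ := h₁'.2 (g ≫ F.map Tr.mor₃)
    simp only at hu
    have hu2 : u ≫ (Tr.mor₁⟦(1:ℤ)⟧') = 0 := by
      apply h₂'.1
      simp only [F.map_comp, F.map_zero, hu, Category.assoc, ← F.map_comp,
        comp_distTriang_mor_zero₃₁ Tr hTr, F.map_zero, comp_zero]
    obtain ⟨v, hv⟩ := Triangle.coyoneda_exact₁ Tr hTr u hu2
    have hw : (g - F.map v) ≫ (F.mapTriangle.obj Tr).mor₃ = 0 := by
      have : F.map u = F.map v ≫ F.map Tr.mor₃ := by rw [← F.map_comp, ← hv]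
      have e : (g - F.map v) ≫ (F.mapTriangle.obj Tr).mor₃ = ((g - F.map v) ≫ F.map Tr.mor₃) ≫ (F.commShiftIso (1:ℤ)).hom.app Tr.obj₁ := (Category.assoc _ _ _).symm
      rw [e, Preadditive.sub_comp, ← hu, ← this, sub_self]
      exact zero_comp
    obtain ⟨t', ht'⟩ := Triangle.coyoneda_exact₃ _ hDT (g - F.map v) hw
    obtain ⟨t, rfl⟩ := h₂.2 t'
    replace ht' : g - F.map v = F.map t ≫ F.map Tr.mor₂ := ht'
    refine ⟨v + t ≫ Tr.mor₂, ?_⟩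
    show F.map (v + t ≫ Tr.mor₂) = g
    rw [F.map_add, F.map_comp, ← ht']
    abel

/-- Contravariant five-lemma step. -/
lemma auxFFF_tri_contra (Tr : Triangle C) (hTr : Tr ∈ distTriang C) (Y : C)
    (h₁ : Function.Bijective (fun g : Tr.obj₁ ⟶ Y => F.map g))
    (h₂ : Function.Bijective (fun g : Tr.obj₂ ⟶ Y => F.map g))
    (h₁' : Function.Bijective (fun g : Tr.obj₁⟦(1:ℤ)⟧ ⟶ Y => F.map g))
    (h₂' : Function.Bijective (fun g : Tr.obj₂⟦(1:ℤ)⟧ ⟶ Y => F.map g)) :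
    Function.Bijective (fun g : Tr.obj₃ ⟶ Y => F.map g) := by
  have hDT := F.map_distinguished Tr hTr
  constructor
  · intro a b hab
    simp only at hab
    suffices hz : ∀ c : Tr.obj₃ ⟶ Y, F.map c = 0 → c = 0 by
      have hab' : a - b = 0 := hz _ (by rw [F.map_sub, hab, sub_self])
      rw [← sub_eq_zero]; exact hab'
    intro c hc
    have h3 : Tr.mor₂ ≫ c = 0 := h₂.1 (by simp [F.map_comp, hc])
    obtain ⟨g, rfl⟩ := Triangle.yoneda_exact₃ Tr hTr c h3
    have hD : (F.mapTriangle.obj Tr).mor₃ ≫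
        ((F.commShiftIso (1:ℤ)).inv.app Tr.obj₁ ≫ F.map g) = 0 := by
      have e : (F.mapTriangle.obj Tr).mor₃ ≫ ((F.commShiftIso (1:ℤ)).inv.app Tr.obj₁ ≫ F.map g) = F.map Tr.mor₃ ≫ ((F.commShiftIso (1:ℤ)).hom.app Tr.obj₁ ≫ (F.commShiftIso (1:ℤ)).inv.app Tr.obj₁ ≫ F.map g) := Category.assoc _ _ _
      rw [e, Iso.hom_inv_id_app_assoc, ← F.map_comp]; exact hc
    obtain ⟨k, hk⟩ := Triangle.yoneda_exact₃ _ (rot_of_distTriang _ hDT)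
      ((F.commShiftIso (1:ℤ)).inv.app Tr.obj₁ ≫ F.map g) hD
    obtain ⟨k₀, hk₀⟩ := h₂'.2 ((F.commShiftIso (1:ℤ)).hom.app Tr.obj₂ ≫ k)
    simp only at hk₀
    have hg : g = -(Tr.mor₁⟦(1:ℤ)⟧' ≫ k₀) := by
      apply h₁'.1
      show F.map g = F.map (-(Tr.mor₁⟦(1:ℤ)⟧' ≫ k₀))
      rw [F.map_neg, F.map_comp, hk₀]
      have h5 : F.map g = (F.commShiftIso (1:ℤ)).hom.app Tr.obj₁ ≫
          ((F.commShiftIso (1:ℤ)).inv.app Tr.obj₁ ≫ F.map g) := by simp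
      have hk' : (F.commShiftIso (1:ℤ)).inv.app Tr.obj₁ ≫ F.map g = (F.mapTriangle.obj Tr).rotate.mor₃ ≫ k := hk
      rw [h5, hk']
      have h6 : (F.mapTriangle.obj Tr).rotate.mor₃ =
          -((F.map Tr.mor₁)⟦(1:ℤ)⟧') := rfl
      rw [h6]
      have key : ∀ k' : (F.obj Tr.obj₂)⟦(1:ℤ)⟧ ⟶ F.obj Y,
          (F.commShiftIso (1:ℤ)).hom.app Tr.obj₁ ≫ ((-((F.map Tr.mor₁)⟦(1:ℤ)⟧')) ≫ k') =
            -(F.map (Tr.mor₁⟦(1:ℤ)⟧') ≫ ((F.commShiftIso (1:ℤ)).hom.app Tr.obj₂ ≫ k')) := by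
        intro k'
        simp only [Preadditive.neg_comp, Preadditive.comp_neg, neg_inj]
        rw [F.commShiftIso_hom_naturality_assoc]
      exact key k
    rw [hg]
    rw [Preadditive.comp_neg, ← Category.assoc, comp_distTriang_mor_zero₃₁ Tr hTr,
      zero_comp, neg_zero]
  · intro u
    obtain ⟨p, hp⟩ := h₂.2 (F.map Tr.mor₂ ≫ u)
    simp only at hp
    have hp0 : Tr.mor₁ ≫ p = 0 := h₁.1 (by
      simp only [F.map_comp, F.map_zero, hp, ← Category.assoc, ← F.map_comp,
        comp_distTriang_mor_zero₁₂ Tr hTr, F.map_zero, zero_comp])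
    obtain ⟨q, hq⟩ := Triangle.yoneda_exact₂ Tr hTr p hp0
    have hw : (F.mapTriangle.obj Tr).mor₂ ≫ (u - F.map q) = 0 := by
      have : (F.mapTriangle.obj Tr).mor₂ = F.map Tr.mor₂ := rfl
      show F.map Tr.mor₂ ≫ (u - F.map q) = 0
      rw [Preadditive.comp_sub, ← hp, ← F.map_comp, ← hq, sub_self]
    obtain ⟨r, hr⟩ := Triangle.yoneda_exact₃ _ hDT (u - F.map q) hw
    obtain ⟨r₀, hr₀⟩ := h₁'.2 ((F.commShiftIso (1:ℤ)).hom.app Tr.obj₁ ≫ r)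
    simp only at hr₀
    replace hr : u - F.map q = (F.map Tr.mor₃ ≫ (F.commShiftIso (1:ℤ)).hom.app Tr.obj₁) ≫ r := hr
    refine ⟨q + Tr.mor₃ ≫ r₀, ?_⟩
    show F.map (q + Tr.mor₃ ≫ r₀) = u
    have e2 : F.map Tr.mor₃ ≫ (F.commShiftIso (1:ℤ)).hom.app Tr.obj₁ ≫ r = u - F.map q :=
      (Category.assoc _ _ _).symm.trans hr.symm
    rw [F.map_add, F.map_comp, hr₀, e2]
    abel

end Triangulated

section Coproducts

variable [∀ J : Type v, PreservesColimitsOfShape (Discrete J) F]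

/-- Covariant coproduct step, using compactness. -/
lemma auxFFF_coprod_cov (J : Type v) (f : J → C) (X : C)
    (hX : PreservesColimitsOfShape (Discrete J) (coyoneda.obj (Opposite.op X)))
    (hFX : PreservesColimitsOfShape (Discrete J) (coyoneda.obj (Opposite.op (F.obj X))))
    (h : ∀ j, Function.Bijective (fun g : X ⟶ f j => F.map g)) :
    Function.Bijective (fun g : X ⟶ ∐ f => F.map g) := by
  have ccC : IsColimit (colimit.cocone (Discrete.functor f)) := colimit.isColimit _
  have ccD : IsColimit (F.mapCocone (colimit.cocone (Discrete.functor f))) :=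
    isColimitOfPreserves F ccC
  have hXc : IsColimit ((coyoneda.obj (Opposite.op X)).mapCocone
      (colimit.cocone (Discrete.functor f))) := isColimitOfPreserves _ ccC
  have hFXc : IsColimit ((coyoneda.obj (Opposite.op (F.obj X))).mapCocone
      (F.mapCocone (colimit.cocone (Discrete.functor f)))) := isColimitOfPreserves _ ccD
  let scD : Cocone ((Discrete.functor f ⋙ F) ⋙ coyoneda.obj (Opposite.op (F.obj X))) :=
    { pt := Σ j : J, (F.obj X ⟶ F.obj (f j))
      ι := Discrete.natTrans (fun j => TypeCat.ofHom (fun g => ⟨j.as, g⟩)) }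
  let δ : (F.obj X ⟶ F.obj (∐ f)) → Σ j : J, (F.obj X ⟶ F.obj (f j)) := fun x => hFXc.desc scD x
  have hδ : ∀ (j : J) (u : F.obj X ⟶ F.obj (f j)),
      δ (u ≫ F.map (Sigma.ι f j)) = ⟨j, u⟩ := by
    intro j u
    have := congrArg (fun φ => φ u) (hFXc.fac scD ⟨j⟩)
    exact this
  constructor
  · intro g₁ g₂ hg
    simp only at hg
    obtain ⟨⟨j₁⟩, u₁, hu₁⟩ := Types.jointly_surjective_of_isColimit hXc g₁
    obtain ⟨⟨j₂⟩, u₂, hu₂⟩ := Types.jointly_surjective_of_isColimit hXc g₂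
    simp only [Functor.mapCocone_ι_app] at hu₁ hu₂
    have e₁ : g₁ = u₁ ≫ Sigma.ι f j₁ := hu₁.symm
    have e₂ : g₂ = u₂ ≫ Sigma.ι f j₂ := hu₂.symm
    have h₁ : δ (F.map g₁) = ⟨j₁, F.map u₁⟩ := by rw [e₁, F.map_comp]; exact hδ _ _
    have h₂ : δ (F.map g₂) = ⟨j₂, F.map u₂⟩ := by rw [e₂, F.map_comp]; exact hδ _ _
    rw [hg, h₂] at h₁
    obtain ⟨rfl, h₃⟩ := Sigma.mk.inj_iff.mp h₁.symm
    have h₄ : F.map u₁ = F.map u₂ := eq_of_heq h₃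
    rw [e₁, e₂, (h j₁).1 h₄]
  · intro u
    obtain ⟨⟨j⟩, v, hv⟩ := Types.jointly_surjective_of_isColimit hFXc u
    simp only [Functor.mapCocone_ι_app] at hv
    obtain ⟨w, rfl⟩ := (h j).2 v
    exact ⟨w ≫ Sigma.ι f j, by simpa [F.map_comp] using hv⟩

/-- Contravariant coproduct step. -/
lemma auxFFF_coprod_contra (J : Type v) (f : J → C) (Y : C)
    (h : ∀ j, Function.Bijective (fun g : f j ⟶ Y => F.map g)) :
    Function.Bijective (fun g : ∐ f ⟶ Y => F.map g) := by
  have ccD : IsColimit (F.mapCocone (colimit.cocone (Discrete.functor f))) :=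
    isColimitOfPreserves F (colimit.isColimit _)
  constructor
  · intro g₁ g₂ hg
    simp only at hg
    apply Sigma.hom_ext
    intro j
    apply (h j).1
    simp only [F.map_comp, hg]
  · intro u
    have hc : ∀ j : J, ∃ gj : f j ⟶ Y, F.map gj = F.map (Sigma.ι f j) ≫ u :=
      fun j => (h j).2 _
    choose g hgspec using hc
    refine ⟨Sigma.desc g, ?_⟩
    apply ccD.hom_ext
    rintro ⟨j⟩
    simpa [← F.map_comp] using hgspec j

end Coproducts

end AuxFFF

/-- If `C` is generated, as its own localizing subcategory, by a triangulated
subcategory `C'` of compact objects, and `F : C ⥤ D` is an exact coproduct-preserving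
functor whose restriction to `C'` is fully faithful and which sends objects of `C'` to
compact objects of `D`, then `F` is fully faithful. -/
theorem fully_faithful_of_fully_faithful_on_compact_generators
    (D : Type u') [Category.{v} D] [HasZeroObject D] [HasShift D ℤ]
    [Preadditive D] [∀ n : ℤ, (shiftFunctor D n).Additive] [Pretriangulated D]
    [HasCoproducts.{v} D]
    (C' : Set C)
    -- `C'` is a triangulated subcategory:
    (hshift : ∀ (n : ℤ) ⦃X : C⦄, X ∈ C' → X⟦n⟧ ∈ C')
    (hext : ∀ Tr : Triangle C, Tr ∈ (distTriang C) →
      Tr.obj₁ ∈ C' → Tr.obj₂ ∈ C' → Tr.obj₃ ∈ C')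
    -- objects of `C'` are compact in `C`:
    (hcpt : ∀ X ∈ C', IsCompactObj C X)
    -- `C'` generates `C` as its own localizing subcategory:
    (hgen : ∀ T : Set C, IsLocalizingClass C T → C' ⊆ T → ∀ X : C, X ∈ T)
    (F : C ⥤ D) [F.CommShift ℤ] [F.IsTriangulated]
    [∀ J : Type v, PreservesColimitsOfShape (Discrete J) F]
    -- the restriction of `F` to `C'` is a full embedding:
    (hff : ∀ (X Y : C), X ∈ C' → Y ∈ C' →
      Function.Bijective (fun f : X ⟶ Y => F.map f))
    -- `F` sends objects of `C'` into compact objects of `D`: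
    (hFcpt : ∀ X ∈ C', IsCompactObj D (F.obj X)) :
    ∀ (X Y : C), Function.Bijective (fun f : X ⟶ Y => F.map f) := by
  -- Step 1: for every `Y : C` and `X ∈ C'`, `F.map : (X ⟶ Y) → _` is bijective.
  have hall₁ : ∀ (Y X : C), X ∈ C' →
      Function.Bijective (fun f : X ⟶ Y => F.map f) := by
    set T₁ : Set C :=
      {Y | ∀ X ∈ C', Function.Bijective (fun f : X ⟶ Y => F.map f)} with hT₁
    have t1shift : ∀ (n : ℤ) ⦃Z : C⦄, Z ∈ T₁ → Z⟦n⟧ ∈ T₁ := by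
      intro n Z hZ X hX
      have h := hZ (X⟦(-n : ℤ)⟧) (hshift (-n) hX)
      exact auxFFF_iso F ((shiftFunctorCompIsoId C (-n) n (by omega)).app X)
        (Iso.refl _) (auxFFF_shift F n h)
    have hloc : IsLocalizingClass C T₁ := by
      refine ⟨?_, t1shift, ?_, ?_⟩
      · intro Z Z' e hZ X hX
        exact auxFFF_iso F (Iso.refl X) e (hZ X hX)
      · intro Tr hTrd h1 h2 X hX
        exact auxFFF_tri_cov F Tr hTrd X (h1 X hX) (h2 X hX)
          (t1shift 1 h1 X hX) (t1shift 1 h2 X hX)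
      · intro J f hf X hX
        exact auxFFF_coprod_cov F J f X ((hcpt X hX J).some) ((hFcpt X hX J).some)
          (fun j => hf j X hX)
    intro Y X hX
    exact hgen T₁ hloc (fun Z hZ X' hX' => hff X' Z hX' hZ) Y X hX
  -- Step 2: for every `X Y : C`, `F.map : (X ⟶ Y) → _` is bijective.
  set T₂ : Set C :=
    {X | ∀ Y : C, Function.Bijective (fun f : X ⟶ Y => F.map f)} with hT₂
  have t2shift : ∀ (n : ℤ) ⦃Z : C⦄, Z ∈ T₂ → Z⟦n⟧ ∈ T₂ := by
    intro n Z hZ Y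
    have h := hZ (Y⟦(-n : ℤ)⟧)
    exact auxFFF_iso F (Iso.refl _)
      ((shiftFunctorCompIsoId C (-n) n (by omega)).app Y) (auxFFF_shift F n h)
  have hloc₂ : IsLocalizingClass C T₂ := by
    refine ⟨?_, t2shift, ?_, ?_⟩
    · intro Z Z' e hZ Y
      exact auxFFF_iso F e (Iso.refl Y) (hZ Y)
    · intro Tr hTrd h1 h2 Y
      exact auxFFF_tri_contra F Tr hTrd Y (h1 Y) (h2 Y)
        (t2shift 1 h1 Y) (t2shift 1 h2 Y)
    · intro J f hf Y
      exact auxFFF_coprod_contra F J f Y (fun j => hf j Y)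
  intro X Y
  exact hgen T₂ hloc₂ (fun Z hZ Y' => hall₁ Y' Z hZ) X Y
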